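/- Let n ≥ 3 and let D₈ ⊆ ℝ² be the octagon given as the convex hull of the eight points (−3/10, −2), (3/10, −1), (7/10, 0), (13/10, 2), (3/10, 2), (−3/10, 1), (−7/10, 0), (−13/10, −2). Then the prism P = D₈ × [−1/2, 1/2]ⁿ⁻² ⊆ ℝⁿ admits no lattice tiling of ℝⁿ: there is no full-rank lattice Λ ⊆ ℝⁿ such that P + Λ is a 1-fold lattice tiling of ℝⁿ. -/

import Mathlib

open Set

/-- `Λ` is a full-rank lattice in `ℝⁿ` (identified with `Fin n → ℝ`). -/
def IsFullLattice {n : ℕ} (Λ : Set (Fin n → ℝ)) : Prop :=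
  ∃ b : Module.Basis (Fin n) ℝ (Fin n → ℝ),
    Λ = (Submodule.span ℤ (Set.range ⇑b) : Set (Fin n → ℝ))

/-- `K + Λ` is a `k`-fold tiling of `ℝⁿ`. -/
def IsKFoldTiling {n : ℕ} (K Λ : Set (Fin n → ℝ)) (k : ℕ) : Prop :=
  ∀ x : Fin n → ℝ,
    (k : ℕ∞) ≤ {v | v ∈ Λ ∧ x - v ∈ K}.encard ∧
    {v | v ∈ Λ ∧ x - v ∈ interior K}.encard ≤ (k : ℕ∞)

/-- The octagon `D₈`. -/
noncomputable def D₈ : Set (Fin 2 → ℝ) :=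
  convexHull ℝ ({![-3/10, -2], ![3/10, -1], ![7/10, 0], ![13/10, 2],
    ![3/10, 2], ![-3/10, 1], ![-7/10, 0], ![-13/10, -2]} : Set (Fin 2 → ℝ))

/-- Projection of `ℝⁿ` onto the first two coordinates. -/
def proj2 {n : ℕ} (hn : 2 ≤ n) (x : Fin n → ℝ) : Fin 2 → ℝ :=
  fun j => x (Fin.castLE hn j)

/-- The prism `Q × [-1/2, 1/2]ⁿ⁻²` over a planar set `Q`, viewed in
`ℝⁿ = ℝ² × ℝⁿ⁻²`. -/
def prism {n : ℕ} (hn : 2 ≤ n) (Q : Set (Fin 2 → ℝ)) : Set (Fin n → ℝ) :=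
  {x | proj2 hn x ∈ Q ∧ ∀ l : Fin n, 2 ≤ (l : ℕ) → |x l| ≤ 1 / 2}

lemma D8_convex : Convex ℝ D₈ := convex_convexHull ℝ _

lemma D8_halfplane {a b r : ℝ}
    (h1 : a * (-3/10) + b * (-2) ≤ r) (h2 : a * (3/10) + b * (-1) ≤ r)
    (h3 : a * (7/10) + b * 0 ≤ r) (h4 : a * (13/10) + b * 2 ≤ r)
    (h5 : a * (3/10) + b * 2 ≤ r) (h6 : a * (-3/10) + b * 1 ≤ r)
    (h7 : a * (-7/10) + b * 0 ≤ r) (h8 : a * (-13/10) + b * (-2) ≤ r) :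
    ∀ p ∈ D₈, a * p 0 + b * p 1 ≤ r := by
  intro p hp
  have hconv : Convex ℝ {x : Fin 2 → ℝ | a * x 0 + b * x 1 ≤ r} := by
    intro x hx y hy s t hs ht hst
    simp only [Set.mem_setOf_eq] at hx hy ⊢
    have e0 : (s • x + t • y) 0 = s * x 0 + t * y 0 := rfl
    have e1 : (s • x + t • y) 1 = s * x 1 + t * y 1 := rfl
    rw [e0, e1]
    nlinarith [mul_le_mul_of_nonneg_left hx hs, mul_le_mul_of_nonneg_left hy ht]
  have hsub : ({![-3/10, -2], ![3/10, -1], ![7/10, 0], ![13/10, 2],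
      ![3/10, 2], ![-3/10, 1], ![-7/10, 0], ![-13/10, -2]} : Set (Fin 2 → ℝ))
      ⊆ {x : Fin 2 → ℝ | a * x 0 + b * x 1 ≤ r} := by
    intro z hz
    simp only [Set.mem_insert_iff, Set.mem_singleton_iff] at hz
    rcases hz with rfl|rfl|rfl|rfl|rfl|rfl|rfl|rfl <;>
      (simp only [Set.mem_setOf_eq, Matrix.cons_val_zero, Matrix.cons_val_one,
        Matrix.head_cons]; linarith)
  exact convexHull_min hsub hconv hp

lemma D8_vA : ![-3/10, -2] ∈ D₈ := subset_convexHull ℝ _ (Or.inl rfl)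
lemma D8_vB : ![3/10, -1] ∈ D₈ := subset_convexHull ℝ _ (Or.inr (Or.inl rfl))
lemma D8_vC : ![7/10, 0] ∈ D₈ := subset_convexHull ℝ _ (Or.inr (Or.inr (Or.inl rfl)))
lemma D8_vD : ![13/10, 2] ∈ D₈ :=
  subset_convexHull ℝ _ (Or.inr (Or.inr (Or.inr (Or.inl rfl))))
lemma D8_vE : ![3/10, 2] ∈ D₈ :=
  subset_convexHull ℝ _ (Or.inr (Or.inr (Or.inr (Or.inr (Or.inl rfl)))))
lemma D8_vF : ![-3/10, 1] ∈ D₈ :=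
  subset_convexHull ℝ _ (Or.inr (Or.inr (Or.inr (Or.inr (Or.inr (Or.inl rfl))))))
lemma D8_vG : ![-7/10, 0] ∈ D₈ :=
  subset_convexHull ℝ _ (Or.inr (Or.inr (Or.inr (Or.inr (Or.inr (Or.inr (Or.inl rfl)))))))
lemma D8_vH : ![-13/10, -2] ∈ D₈ :=
  subset_convexHull ℝ _ (Or.inr (Or.inr (Or.inr (Or.inr (Or.inr (Or.inr (Or.inr rfl)))))))

lemma mem_D8_of_comb (c1 c2 c3 c4 : ℝ) (z : Fin 2 → ℝ)
    (h1 : 0 ≤ c1) (h2 : 0 ≤ c2) (h3 : 0 ≤ c3) (h4 : 0 ≤ c4)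
    (hsum : c1 + c2 + c3 + c4 = 1)
    (hz0 : z 0 = c1*(7/10) + c2*(3/10) + c3*(-7/10) + c4*(-3/10))
    (hz1 : z 1 = c2*2 + c4*(-2)) : z ∈ D₈ := by
  have key := Convex.sum_mem (t := (Finset.univ : Finset (Fin 4)))
    (w := ![c1, c2, c3, c4])
    (z := ![(![7/10, 0] : Fin 2 → ℝ), ![3/10, 2], ![-7/10, 0], ![-3/10, -2]])
    D8_convex
    (by intro i _; fin_cases i <;> simp [h1, h2, h3, h4])
    (by simp [Fin.sum_univ_four]; linarith)
    (by intro i _; fin_cases i; exacts [D8_vC, D8_vE, D8_vG, D8_vA])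
  have hz : z = ∑ i : Fin 4, (![c1, c2, c3, c4]) i •
      (![(![7/10, 0] : Fin 2 → ℝ), ![3/10, 2], ![-7/10, 0], ![-3/10, -2]]) i := by
    funext j
    fin_cases j <;>
      simp [Fin.sum_univ_four, Matrix.cons_val_zero, Matrix.cons_val_one, Matrix.head_cons] <;>
      linarith
  rw [hz]; exact key

lemma box_subset_D8 : ∀ z : Fin 2 → ℝ, |z 0| ≤ 1/5 → |z 1| ≤ 1/5 → z ∈ D₈ := by
  intro z h0 h1
  obtain ⟨h0a, h0b⟩ := abs_le.1 h0
  obtain ⟨h1a, h1b⟩ := abs_le.1 h1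
  set α : ℝ := (20 * z 0 - 3 * z 1)/14 with hα
  set β : ℝ := z 1 / 2 with hβ
  have hαa : -(23/70) ≤ α := by rw [hα]; linarith
  have hαb : α ≤ 23/70 := by rw [hα]; linarith
  have hβa : -(1/10) ≤ β := by rw [hβ]; linarith
  have hβb : β ≤ 1/10 := by rw [hβ]; linarith
  rcases le_total 0 α with ha|ha <;> rcases le_total 0 β with hb|hb
  · exact mem_D8_of_comb (α + (1 - α - β)/2) β ((1 - α - β)/2) 0 z
      (by linarith) hb (by linarith) le_rfl
      (by ring) (by rw [hα, hβ]; ring) (by rw [hβ]; ring)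
  · exact mem_D8_of_comb (α + (1 - α + β)/2) 0 ((1 - α + β)/2) (-β) z
      (by linarith) le_rfl (by linarith) (by linarith)
      (by ring) (by rw [hα, hβ]; ring) (by rw [hβ]; ring)
  · exact mem_D8_of_comb ((1 + α - β)/2) β ((1 + α - β)/2 - α) 0 z
      (by linarith) hb (by linarith) le_rfl
      (by ring) (by rw [hα, hβ]; ring) (by rw [hβ]; ring)
  · exact mem_D8_of_comb ((1 + α + β)/2) 0 ((1 + α + β)/2 - α) (-β) z
      (by linarith) le_rfl (by linarith) (by linarith)
      (by ring) (by rw [hα, hβ]; ring) (by rw [hβ]; ring)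

lemma D8_closed : IsClosed D₈ :=
  (Set.Finite.isCompact_convexHull ℝ (by
    apply Set.Finite.insert; apply Set.Finite.insert; apply Set.Finite.insert
    apply Set.Finite.insert; apply Set.Finite.insert; apply Set.Finite.insert
    apply Set.Finite.insert; exact Set.finite_singleton _)).isClosed

lemma openBox_isOpen : IsOpen {z : Fin 2 → ℝ | |z 0| < 1/5 ∧ |z 1| < 1/5} := by
  have h0 : IsOpen {z : Fin 2 → ℝ | |z 0| < 1/5} :=
    isOpen_lt ((continuous_apply (0 : Fin 2)).abs) continuous_const
  have h1 : IsOpen {z : Fin 2 → ℝ | |z 1| < 1/5} :=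
    isOpen_lt ((continuous_apply (1 : Fin 2)).abs) continuous_const
  exact h0.inter h1

lemma openBox_subset_interior : ∀ z : Fin 2 → ℝ, |z 0| < 1/5 → |z 1| < 1/5 →
    z ∈ interior D₈ := by
  intro z h0 h1
  refine interior_maximal ?_ openBox_isOpen ⟨h0, h1⟩
  intro y hy
  exact box_subset_D8 y hy.1.le hy.2.le

lemma zero_mem_interior_D8 : (0 : Fin 2 → ℝ) ∈ interior D₈ := by
  apply openBox_subset_interior <;> norm_num

lemma D8_box : ∀ p ∈ D₈, |p 0| ≤ 13/10 ∧ |p 1| ≤ 2 := by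
  intro p hp
  have h1 := D8_halfplane (a := 1) (b := 0) (r := 13/10)
    (by norm_num) (by norm_num) (by norm_num) (by norm_num)
    (by norm_num) (by norm_num) (by norm_num) (by norm_num) p hp
  have h2 := D8_halfplane (a := -1) (b := 0) (r := 13/10)
    (by norm_num) (by norm_num) (by norm_num) (by norm_num)
    (by norm_num) (by norm_num) (by norm_num) (by norm_num) p hp
  have h3 := D8_halfplane (a := 0) (b := 1) (r := 2)
    (by norm_num) (by norm_num) (by norm_num) (by norm_num)
    (by norm_num) (by norm_num) (by norm_num) (by norm_num) p hp
  have h4 := D8_halfplane (a := 0) (b := -1) (r := 2)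
    (by norm_num) (by norm_num) (by norm_num) (by norm_num)
    (by norm_num) (by norm_num) (by norm_num) (by norm_num) p hp
  constructor <;> rw [abs_le] <;> constructor <;> linarith

lemma tile_convex (u : Fin 2 → ℝ) : Convex ℝ {x : Fin 2 → ℝ | x - u ∈ D₈} := by
  intro x hx y hy s t hs ht hst
  simp only [Set.mem_setOf_eq] at hx hy ⊢
  have : s • x + t • y - u = s • (x - u) + t • (y - u) :=
    calc s • x + t • y - u = s • x + t • y - (s + t) • u := by rw [hst, one_smul]
      _ = s • (x - u) + t • (y - u) := by rw [add_smul, smul_sub, smul_sub]; abel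
  rw [this]
  exact D8_convex hx hy hs ht hst

lemma tile_interior (u : Fin 2 → ℝ) :
    interior {x : Fin 2 → ℝ | x - u ∈ D₈} = {x : Fin 2 → ℝ | x - u ∈ interior D₈} := by
  have h : {x : Fin 2 → ℝ | x - u ∈ D₈} = (Homeomorph.subRight u) ⁻¹' D₈ := rfl
  have h2 : {x : Fin 2 → ℝ | x - u ∈ interior D₈}
      = (Homeomorph.subRight u) ⁻¹' (interior D₈) := rfl
  rw [h, h2, Homeomorph.preimage_interior]

lemma tile_closed (u : Fin 2 → ℝ) : IsClosed {x : Fin 2 → ℝ | x - u ∈ D₈} :=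
  D8_closed.preimage (continuous_sub_right u)

lemma clm_apply_eq (f : (Fin 2 → ℝ) →L[ℝ] ℝ) (z : Fin 2 → ℝ) :
    f z = z 0 * f ![1,0] + z 1 * f ![0,1] := by
  have hz : z = z 0 • ![(1:ℝ),0] + z 1 • ![(0:ℝ),1] := by
    funext i; fin_cases i <;> simp
  conv_lhs => rw [hz]
  rw [map_add, map_smul, map_smul, smul_eq_mul, smul_eq_mul]

lemma linfunc_le_of_lt_on_interior {s : Set (Fin 2 → ℝ)} (hs : Convex ℝ s) {z₀ : Fin 2 → ℝ}
    (hz₀ : z₀ ∈ interior s) (f : (Fin 2 → ℝ) →L[ℝ] ℝ) (κ : ℝ)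
    (hf : ∀ y ∈ interior s, f y < κ) : ∀ x ∈ s, f x ≤ κ := by
  intro x hx
  by_contra hlt
  push_neg at hlt
  have key : ∀ a b : ℝ, 0 < a → 0 ≤ b → a + b = 1 → a * f z₀ + b * f x < κ := by
    intro a b ha hb hab
    have := hf _ (hs.combo_interior_self_mem_interior hz₀ hx ha hb hab)
    rwa [map_add, map_smul, map_smul, smul_eq_mul, smul_eq_mul] at this
  rcases le_or_gt (f x) (f z₀) with hq | hq
  · have := key 1 0 one_pos le_rfl (by ring)
    simp only [one_mul, zero_mul, add_zero] at this
    linarith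
  · set δ := f x - κ with hδ
    have hδpos : 0 < δ := by simp [hδ]; linarith
    set q := f x - f z₀ with hq'
    have hqpos : 0 < q := by simp [hq']; linarith
    set a := min 1 (δ / (2 * q)) with ha
    have hapos : 0 < a := lt_min one_pos (by positivity)
    have hale : a ≤ 1 := min_le_left _ _
    have haq : a * q ≤ δ / 2 := by
      calc a * q ≤ (δ / (2*q)) * q := by
            apply mul_le_mul_of_nonneg_right (min_le_right _ _) hqpos.le
        _ = δ / 2 := by field_simp
    have := key a (1 - a) hapos (by linarith) (by ring)
    have hexp : a * f z₀ + (1 - a) * f x = f x - a * q := by rw [hq']; ring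
    rw [hexp] at this
    linarith

lemma linfunc_ge_of_gt_on_interior {s : Set (Fin 2 → ℝ)} (hs : Convex ℝ s) {z₀ : Fin 2 → ℝ}
    (hz₀ : z₀ ∈ interior s) (f : (Fin 2 → ℝ) →L[ℝ] ℝ) (κ : ℝ)
    (hf : ∀ y ∈ interior s, κ < f y) : ∀ x ∈ s, κ ≤ f x := by
  have := linfunc_le_of_lt_on_interior hs hz₀ (-f) (-κ) (by
    intro y hy
    simp only [ContinuousLinearMap.neg_apply]
    have := hf y hy; linarith)
  intro x hx
  have hx2 := this x hx
  simp only [ContinuousLinearMap.neg_apply] at hx2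
  linarith

lemma exists_sep (u₁ u₂ : Fin 2 → ℝ)
    (hdisj : ∀ y : Fin 2 → ℝ, y - u₁ ∈ interior D₈ → y - u₂ ∈ interior D₈ → False) :
    ∃ a b κ : ℝ, (¬ (a = 0 ∧ b = 0)) ∧
      (∀ x : Fin 2 → ℝ, x - u₁ ∈ D₈ → x 0 * a + x 1 * b ≤ κ) ∧
      (∀ x : Fin 2 → ℝ, x - u₂ ∈ D₈ → κ ≤ x 0 * a + x 1 * b) := by
  have hmem1 : u₁ ∈ interior {x : Fin 2 → ℝ | x - u₁ ∈ D₈} := by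
    rw [tile_interior]; simp only [Set.mem_setOf_eq, sub_self]; exact zero_mem_interior_D8
  have hmem2 : u₂ ∈ interior {x : Fin 2 → ℝ | x - u₂ ∈ D₈} := by
    rw [tile_interior]; simp only [Set.mem_setOf_eq, sub_self]; exact zero_mem_interior_D8
  obtain ⟨f, κ, h1, h2⟩ := geometric_hahn_banach_open_open
    (s := interior {x : Fin 2 → ℝ | x - u₁ ∈ D₈})
    (t := interior {x : Fin 2 → ℝ | x - u₂ ∈ D₈})
    (tile_convex u₁).interior isOpen_interior (tile_convex u₂).interior isOpen_interior
    (by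
      rw [Set.disjoint_left]
      intro y hy1 hy2
      rw [tile_interior] at hy1 hy2
      exact hdisj y hy1 hy2)
  have hle : ∀ x ∈ {x : Fin 2 → ℝ | x - u₁ ∈ D₈}, f x ≤ κ :=
    linfunc_le_of_lt_on_interior (tile_convex u₁) hmem1 f κ h1
  have hge : ∀ x ∈ {x : Fin 2 → ℝ | x - u₂ ∈ D₈}, κ ≤ f x :=
    linfunc_ge_of_gt_on_interior (tile_convex u₂) hmem2 f κ h2
  refine ⟨f ![1,0], f ![0,1], κ, ?_, ?_, ?_⟩
  · rintro ⟨ha, hb⟩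
    have hz1 := h1 u₁ hmem1
    have hz2 := h2 u₂ hmem2
    rw [clm_apply_eq, ha, hb] at hz1 hz2
    simp at hz1 hz2
    linarith
  · intro x hx; rw [← clm_apply_eq]; exact hle x hx
  · intro x hx; rw [← clm_apply_eq]; exact hge x hx

lemma floor_close {a b : ℝ} (h : ⌊a⌋ = ⌊b⌋) : |a - b| < 1 := by
  have h1 := Int.floor_le a
  have h2 := Int.lt_floor_add_one a
  have h3 := Int.floor_le b
  have h4 := Int.lt_floor_add_one b
  rw [h] at h1 h2
  rw [abs_sub_lt_iff]; constructor <;> linarith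

set_option maxHeartbeats 800000 in
lemma touching_tile (S : Set (Fin 2 → ℝ))
    (hcov : ∀ y : Fin 2 → ℝ, ∃ u ∈ S, y - u ∈ D₈)
    (hsep : ∀ u ∈ S, ∀ u' ∈ S, u ≠ u' → 2/5 ≤ |u 0 - u' 0| ∨ 2/5 ≤ |u 1 - u' 1|)
    (q w : Fin 2 → ℝ) (hw : ∀ i, |w i| ≤ 1) :
    ∃ u ∈ S, q - u ∈ D₈ ∧ ∃ ε : ℝ, 0 < ε ∧ (q + ε • w) - u ∈ D₈ := by
  set p : ℕ → (Fin 2 → ℝ) := fun k => q + (1/((k:ℝ)+1)) • w with hp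
  have hkpos : ∀ k : ℕ, 0 < 1/((k:ℝ)+1) := by
    intro k; positivity
  have hkle : ∀ k : ℕ, 1/((k:ℝ)+1) ≤ 1 := by
    intro k
    rw [div_le_one (by positivity)]
    have : (0:ℝ) ≤ k := Nat.cast_nonneg k
    linarith
  choose U hUS hUD using fun k => hcov (p k)
  have hpcoord : ∀ k (i : Fin 2), p k i - q i = (1/((k:ℝ)+1)) * w i := by
    intro k i; simp [hp]
  set Sbig := {u : Fin 2 → ℝ | u ∈ S ∧ |u 0 - q 0| ≤ 4 ∧ |u 1 - q 1| ≤ 4} with hSbig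
  have hUb : ∀ k, U k ∈ Sbig := by
    intro k
    refine ⟨hUS k, ?_, ?_⟩ <;>
    · have hD := D8_box _ (hUD k)
      have hc : ∀ i : Fin 2, |p k i - U k i| ≤ 2 := by
        intro i
        have h0 := hD.1
        have h1 := hD.2
        fin_cases i
        · calc |p k 0 - U k 0| = |(p k - U k) 0| := by simp
            _ ≤ 13/10 := h0
            _ ≤ 2 := by norm_num
        · calc |p k 1 - U k 1| = |(p k - U k) 1| := by simp
            _ ≤ 2 := h1
      have hq : ∀ i : Fin 2, |p k i - q i| ≤ 1 := by
        intro i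
        rw [hpcoord k i, abs_mul]
        have := hw i
        have h1 := (hkpos k).le
        have h2 := hkle k
        rw [abs_of_nonneg h1]
        nlinarith
      have tri : ∀ i : Fin 2, |U k i - q i| ≤ 4 := by
        intro i
        have := abs_sub_le (U k i) (p k i) (q i)
        have h1 := hc i
        rw [abs_sub_comm] at h1
        have h2 := hq i
        linarith
      first
      | exact tri 0
      | exact tri 1
  -- finiteness of Sbig
  have hfin : Sbig.Finite := by
    set g : (Fin 2 → ℝ) → ℤ × ℤ := fun u => (⌊5*u 0⌋, ⌊5*u 1⌋) with hg
    have hinj : Set.InjOn g Sbig := by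
      intro u hu u' hu' hgu
      by_contra hne
      have h0 : |u 0 - u' 0| < 2/5 := by
        have := floor_close (congrArg Prod.fst hgu)
        have h : |5*u 0 - 5*u' 0| < 1 := this
        rw [show 5*u 0 - 5*u' 0 = 5*(u 0 - u' 0) by ring, abs_mul] at h
        rw [abs_of_nonneg (by norm_num : (0:ℝ) ≤ 5)] at h
        linarith [abs_nonneg (u 0 - u' 0)]
      have h1 : |u 1 - u' 1| < 2/5 := by
        have := floor_close (congrArg Prod.snd hgu)
        have h : |5*u 1 - 5*u' 1| < 1 := this
        rw [show 5*u 1 - 5*u' 1 = 5*(u 1 - u' 1) by ring, abs_mul] at h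
        rw [abs_of_nonneg (by norm_num : (0:ℝ) ≤ 5)] at h
        linarith [abs_nonneg (u 1 - u' 1)]
      rcases hsep u hu.1 u' hu'.1 hne with h | h <;> linarith
    have himg : g '' Sbig ⊆ Set.Icc (⌊5*(q 0 - 4)⌋, ⌊5*(q 1 - 4)⌋) (⌊5*(q 0 + 4)⌋, ⌊5*(q 1 + 4)⌋) := by
      rintro _ ⟨u, hu, rfl⟩
      obtain ⟨-, hu0, hu1⟩ := hu
      rw [abs_le] at hu0 hu1
      constructor <;> constructor <;>
        apply Int.floor_mono <;> linarith
    exact Set.Finite.of_finite_image ((Set.finite_Icc _ _).subset himg) hinj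
  haveI : Finite ↥Sbig := hfin.to_subtype
  set g2 : ℕ → ↥Sbig := fun k => ⟨U k, hUb k⟩ with hg2
  obtain ⟨ustar, hfib⟩ := Finite.exists_infinite_fiber g2
  have hI : (g2 ⁻¹' {ustar}).Infinite := Set.infinite_coe_iff.mp hfib
  have hIU : ∀ k ∈ g2 ⁻¹' {ustar}, U k = (ustar : Fin 2 → ℝ) := by
    intro k hk
    have : g2 k = ustar := hk
    exact congrArg Subtype.val this
  obtain ⟨k₀, hk₀⟩ := hI.nonempty
  refine ⟨(ustar : Fin 2 → ℝ), ustar.2.1, ?_, 1/((k₀:ℝ)+1), hkpos k₀, ?_⟩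
  · -- q in the closed tile
    apply (tile_closed (ustar : Fin 2 → ℝ)).closure_subset
    rw [Metric.mem_closure_iff]
    intro δ hδ
    obtain ⟨N, hN⟩ := exists_nat_gt (1/δ)
    obtain ⟨k, hkI, hkN⟩ := hI.exists_gt N
    refine ⟨p k, ?_, ?_⟩
    · show p k - (ustar : Fin 2 → ℝ) ∈ D₈
      rw [← hIU k hkI]
      exact hUD k
    · have : dist q (p k) = ‖(1/((k:ℝ)+1)) • w‖ := by
        rw [hp]; exact dist_self_add_right _ _
      rw [this, norm_smul, Real.norm_eq_abs, abs_of_nonneg (hkpos k).le]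
      have hwn : ‖w‖ ≤ 1 := by
        rw [pi_norm_le_iff_of_nonneg zero_le_one]
        intro i; rw [Real.norm_eq_abs]; exact hw i
      have hkd : 1/((k:ℝ)+1) < δ := by
        rw [div_lt_iff₀ (by positivity)]
        have hkN' : (N:ℝ) < k := by exact_mod_cast hkN
        have h1 : 1/δ < (k:ℝ) + 1 := by linarith
        have h2 : δ * (1/δ) = 1 := by field_simp
        nlinarith
      calc 1/((k:ℝ)+1) * ‖w‖ ≤ 1/((k:ℝ)+1) * 1 :=
            mul_le_mul_of_nonneg_left hwn (hkpos k).le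
        _ < δ := by rw [mul_one]; exact hkd
  · rw [← hIU k₀ hk₀]
    exact hUD k₀

lemma D8_hp1 : ∀ p ∈ D₈, (0:ℝ) * p 0 + (-1) * p 1 ≤ 2 :=
  D8_halfplane (by norm_num) (by norm_num) (by norm_num) (by norm_num)
    (by norm_num) (by norm_num) (by norm_num) (by norm_num)
lemma D8_hp3 : ∀ p ∈ D₈, (1:ℝ) * p 0 + (-2/5) * p 1 ≤ 7/10 :=
  D8_halfplane (by norm_num) (by norm_num) (by norm_num) (by norm_num)
    (by norm_num) (by norm_num) (by norm_num) (by norm_num)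
lemma D8_hp4 : ∀ p ∈ D₈, (2:ℝ) * p 0 + (-3/5) * p 1 ≤ 7/5 :=
  D8_halfplane (by norm_num) (by norm_num) (by norm_num) (by norm_num)
    (by norm_num) (by norm_num) (by norm_num) (by norm_num)
lemma D8_hp6 : ∀ p ∈ D₈, (-1:ℝ) * p 0 + (3/5) * p 1 ≤ 9/10 :=
  D8_halfplane (by norm_num) (by norm_num) (by norm_num) (by norm_num)
    (by norm_num) (by norm_num) (by norm_num) (by norm_num)
lemma D8_hp7 : ∀ p ∈ D₈, (-1:ℝ) * p 0 + (2/5) * p 1 ≤ 7/10 :=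
  D8_halfplane (by norm_num) (by norm_num) (by norm_num) (by norm_num)
    (by norm_num) (by norm_num) (by norm_num) (by norm_num)
lemma D8_hp8 : ∀ p ∈ D₈, (-2:ℝ) * p 0 + (3/5) * p 1 ≤ 7/5 :=
  D8_halfplane (by norm_num) (by norm_num) (by norm_num) (by norm_num)
    (by norm_num) (by norm_num) (by norm_num) (by norm_num)
-- continuation of s1, will concat later
set_option maxHeartbeats 2000000 in
theorem no_translative_tiling (S : Set (Fin 2 → ℝ))
    (hcov : ∀ y : Fin 2 → ℝ, ∃ u ∈ S, y - u ∈ D₈)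
    (hpack : ∀ u ∈ S, ∀ u' ∈ S, u ≠ u' → ∀ y : Fin 2 → ℝ,
      y - u ∈ interior D₈ → y - u' ∈ interior D₈ → False) : False := by
  classical
  -- separation of centers
  have hsep : ∀ u ∈ S, ∀ u' ∈ S, u ≠ u' → 2/5 ≤ |u 0 - u' 0| ∨ 2/5 ≤ |u 1 - u' 1| := by
    intro u hu u' hu' hne
    by_contra hcon
    push_neg at hcon
    obtain ⟨h0, h1⟩ := hcon
    have hmem1 : ((1/2 : ℝ) • (u + u')) - u ∈ interior D₈ := by
      apply openBox_subset_interior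
      · have e : (((1/2 : ℝ) • (u + u')) - u) 0 = (u' 0 - u 0)/2 := by
          simp [Pi.smul_apply, Pi.add_apply, Pi.sub_apply, smul_eq_mul]; ring
        have h := h0; rw [abs_sub_comm] at h
        rw [e, abs_div, abs_two]; linarith
      · have e : (((1/2 : ℝ) • (u + u')) - u) 1 = (u' 1 - u 1)/2 := by
          simp [Pi.smul_apply, Pi.add_apply, Pi.sub_apply, smul_eq_mul]; ring
        have h := h1; rw [abs_sub_comm] at h
        rw [e, abs_div, abs_two]; linarith
    have hmem2 : ((1/2 : ℝ) • (u + u')) - u' ∈ interior D₈ := by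
      apply openBox_subset_interior
      · have e : (((1/2 : ℝ) • (u + u')) - u') 0 = (u 0 - u' 0)/2 := by
          simp [Pi.smul_apply, Pi.add_apply, Pi.sub_apply, smul_eq_mul]; ring
        rw [e, abs_div, abs_two]; linarith
      · have e : (((1/2 : ℝ) • (u + u')) - u') 1 = (u 1 - u' 1)/2 := by
          simp [Pi.smul_apply, Pi.add_apply, Pi.sub_apply, smul_eq_mul]; ring
        rw [e, abs_div, abs_two]; linarith
    exact hpack u hu u' hu' hne _ hmem1 hmem2
  -- base tile
  obtain ⟨u₀, hu₀S, -⟩ := hcov 0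
  set q : Fin 2 → ℝ := u₀ + ![7/10, 0] with hqdef
  have hq0 : q 0 = u₀ 0 + 7/10 := rfl
  have hq1 : q 1 = u₀ 1 + 0 := rfl
  have hqT0 : q - u₀ ∈ D₈ := by
    have : q - u₀ = ![7/10, 0] := by rw [hqdef]; abel
    rw [this]; exact D8_vC
  -- first touching tile, in direction w₁ = (-7/20, -1)
  obtain ⟨u₁, hu₁S, hqT1, ε₁, hε₁, hsT1⟩ :=
    touching_tile S hcov hsep q ![-7/20, -1]
      (by intro i; rw [abs_le]; fin_cases i <;> constructor <;> norm_num)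
  have hx1e : (q + ε₁ • ![(-7/20 : ℝ), -1]) 0 = q 0 - (7/20)*ε₁ := by
    simp [Pi.add_apply, Pi.smul_apply, smul_eq_mul]; ring
  have hy1e : (q + ε₁ • ![(-7/20 : ℝ), -1]) 1 = q 1 - ε₁ := by
    simp [Pi.add_apply, Pi.smul_apply, smul_eq_mul]; ring
  have hu₁ne : u₁ ≠ u₀ := by
    intro h
    rw [h] at hsT1
    have hhp := D8_hp3 _ hsT1
    have e0 : (q + ε₁ • ![(-7/20 : ℝ), -1] - u₀) 0 = 7/10 - (7/20)*ε₁ := by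
      simp only [Pi.sub_apply]; rw [hx1e, hq0]; ring
    have e1 : (q + ε₁ • ![(-7/20 : ℝ), -1] - u₀) 1 = -ε₁ := by
      simp only [Pi.sub_apply]; rw [hy1e, hq1]; ring
    rw [e0, e1] at hhp
    linarith
  -- separation between tile u₀ and tile u₁
  obtain ⟨a, b, κ, hab, hle, hge⟩ := exists_sep u₀ u₁
    (fun y hy1 hy2 => hpack u₀ hu₀S u₁ hu₁S (Ne.symm hu₁ne) y hy1 hy2)
  have hκq : q 0 * a + q 1 * b = κ :=
    le_antisymm (hle q hqT0) (hge q hqT1)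
  have hvB : (3/10 + u₀ 0) * a + (-1 + u₀ 1) * b ≤ κ := by
    exact hle (![3/10, -1] + u₀) (by rw [add_sub_cancel_right]; exact D8_vB)
  have hvD : (13/10 + u₀ 0) * a + (2 + u₀ 1) * b ≤ κ := by
    exact hle (![13/10, 2] + u₀) (by rw [add_sub_cancel_right]; exact D8_vD)
  have hκq0 : (u₀ 0 + 7/10) * a + (u₀ 1 + 0) * b = κ := by rw [← hq0, ← hq1]; exact hκq
  have hBa : -(2/5)*a ≤ b := by linarith [hκq0, hvB]
  have hDa : b ≤ -(3/10)*a := by linarith [hκq0, hvD]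
  have hw1c : (7/20)*a + b ≤ 0 := by
    have hx := hge (q + ε₁ • ![(-7/20 : ℝ), -1]) hsT1
    rw [hx1e, hy1e] at hx
    by_contra hpos
    push_neg at hpos
    linarith [mul_pos hε₁ hpos, hx, hκq]
  have ha : 0 < a := by
    rcases lt_or_ge 0 a with h | h
    · exact h
    · exfalso
      have ha0 : a = 0 := le_antisymm h (by linarith)
      exact hab ⟨ha0, by rw [ha0] at hBa hw1c; linarith⟩
  set x₁ : ℝ := q 0 - u₁ 0 with hx₁
  set y₁ : ℝ := q 1 - u₁ 1 with hy₁
  have hb₁0 : (q - u₁) 0 = x₁ := rfl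
  have hb₁1 : (q - u₁) 1 = y₁ := rfl
  have hminG : x₁ * a + y₁ * b ≤ (-7/10) * a := by
    have := hge (![-7/10, 0] + u₁) (by rw [add_sub_cancel_right]; exact D8_vG)
    simp only [Pi.add_apply, Matrix.cons_val_zero, Matrix.cons_val_one, Matrix.head_cons] at this
    rw [hx₁, hy₁]
    linarith [hκq, this]
  have h7b₁ : (-1) * x₁ + (2/5) * y₁ ≤ 7/10 := by
    have := D8_hp7 _ hqT1; rw [hb₁0, hb₁1] at this; linarith
  have h8b₁ : (-2) * x₁ + (3/5) * y₁ ≤ 7/5 := by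
    have := D8_hp8 _ hqT1; rw [hb₁0, hb₁1] at this; linarith
  have h6b₁ : (-1) * x₁ + (3/5) * y₁ ≤ 9/10 := by
    have := D8_hp6 _ hqT1; rw [hb₁0, hb₁1] at this; linarith
  -- the key equality: b₁ lies on the line of edge FG
  have hline1 : (-1) * x₁ + (2/5) * y₁ = 7/10 := by
    rcases eq_or_lt_of_le h7b₁ with h | h
    · exact h
    · exfalso
      have hα : 0 < -10*b - 3*a := by linarith
      have hβ : 0 ≤ 2*a + 5*b := by linarith
      linarith [mul_pos hα (by linarith : (0:ℝ) < 7/10 - ((-1) * x₁ + (2/5) * y₁)),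
        mul_nonneg hβ (by linarith : (0:ℝ) ≤ 7/5 - ((-2) * x₁ + (3/5) * y₁)), hminG]
  have hy₁0 : 0 ≤ y₁ := by linarith
  have hy₁1 : y₁ ≤ 1 := by linarith
  -- second touching tile, in direction w₂ = (7/20, 1)
  obtain ⟨u₂, hu₂S, hqT2, ε₂, hε₂, hsT2⟩ :=
    touching_tile S hcov hsep q ![(7/20 : ℝ), 1]
      (by intro i; rw [abs_le]; fin_cases i <;> constructor <;> norm_num)
  have hx2e : (q + ε₂ • ![(7/20 : ℝ), 1]) 0 = q 0 + (7/20)*ε₂ := by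
    simp [Pi.add_apply, Pi.smul_apply, smul_eq_mul]; ring
  have hy2e : (q + ε₂ • ![(7/20 : ℝ), 1]) 1 = q 1 + ε₂ := by
    simp [Pi.add_apply, Pi.smul_apply, smul_eq_mul]
  have hu₂ne0 : u₂ ≠ u₀ := by
    intro h
    rw [h] at hsT2
    have hhp := D8_hp4 _ hsT2
    have e0 : (q + ε₂ • ![(7/20 : ℝ), 1] - u₀) 0 = 7/10 + (7/20)*ε₂ := by
      simp only [Pi.sub_apply]; rw [hx2e, hq0]; ring
    have e1 : (q + ε₂ • ![(7/20 : ℝ), 1] - u₀) 1 = ε₂ := by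
      simp only [Pi.sub_apply]; rw [hy2e, hq1]; ring
    rw [e0, e1] at hhp
    linarith
  have hu₂ne1 : u₂ ≠ u₁ := by
    intro h
    rw [h] at hsT2
    have hhp := D8_hp7 _ hsT2
    have e0 : (q + ε₂ • ![(7/20 : ℝ), 1] - u₁) 0 = x₁ + (7/20)*ε₂ := by
      simp only [Pi.sub_apply]; rw [hx2e, hx₁]; ring
    have e1 : (q + ε₂ • ![(7/20 : ℝ), 1] - u₁) 1 = y₁ + ε₂ := by
      simp only [Pi.sub_apply]; rw [hy2e, hy₁]; ring
    rw [e0, e1] at hhp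
    linarith
  -- separation between tile u₀ and tile u₂
  obtain ⟨a', b', κ', hab', hle', hge'⟩ := exists_sep u₀ u₂
    (fun y hy1 hy2 => hpack u₀ hu₀S u₂ hu₂S (Ne.symm hu₂ne0) y hy1 hy2)
  have hκq' : q 0 * a' + q 1 * b' = κ' :=
    le_antisymm (hle' q hqT0) (hge' q hqT2)
  have hvB' : (3/10 + u₀ 0) * a' + (-1 + u₀ 1) * b' ≤ κ' := by
    exact hle' (![3/10, -1] + u₀) (by rw [add_sub_cancel_right]; exact D8_vB)
  have hvD' : (13/10 + u₀ 0) * a' + (2 + u₀ 1) * b' ≤ κ' := by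
    exact hle' (![13/10, 2] + u₀) (by rw [add_sub_cancel_right]; exact D8_vD)
  have hκq0' : (u₀ 0 + 7/10) * a' + (u₀ 1 + 0) * b' = κ' := by rw [← hq0, ← hq1]; exact hκq'
  have hBa' : -(2/5)*a' ≤ b' := by linarith [hκq0', hvB']
  have hDa' : b' ≤ -(3/10)*a' := by linarith [hκq0', hvD']
  have hw2c : 0 ≤ (7/20)*a' + b' := by
    have hx := hge' (q + ε₂ • ![(7/20 : ℝ), 1]) hsT2
    rw [hx2e, hy2e] at hx
    by_contra hneg
    push_neg at hneg
    linarith [mul_pos hε₂ (by linarith : (0:ℝ) < -((7/20)*a' + b')), hx, hκq']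
  have ha' : 0 < a' := by
    rcases lt_or_ge 0 a' with h | h
    · exact h
    · exfalso
      have ha0 : a' = 0 := le_antisymm h (by linarith)
      exact hab' ⟨ha0, by rw [ha0] at hDa' hw2c; linarith⟩
  set x₂ : ℝ := q 0 - u₂ 0 with hx₂
  set y₂ : ℝ := q 1 - u₂ 1 with hy₂
  have hb₂0 : (q - u₂) 0 = x₂ := rfl
  have hb₂1 : (q - u₂) 1 = y₂ := rfl
  have hminG' : x₂ * a' + y₂ * b' ≤ (-7/10) * a' := by
    have := hge' (![-7/10, 0] + u₂) (by rw [add_sub_cancel_right]; exact D8_vG)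
    simp only [Pi.add_apply, Matrix.cons_val_zero, Matrix.cons_val_one, Matrix.head_cons] at this
    rw [hx₂, hy₂]
    linarith [hκq', this]
  have h7b₂ : (-1) * x₂ + (2/5) * y₂ ≤ 7/10 := by
    have := D8_hp7 _ hqT2; rw [hb₂0, hb₂1] at this; linarith
  have h8b₂ : (-2) * x₂ + (3/5) * y₂ ≤ 7/5 := by
    have := D8_hp8 _ hqT2; rw [hb₂0, hb₂1] at this; linarith
  have h1b₂ : (0:ℝ) * x₂ + (-1) * y₂ ≤ 2 := by
    have := D8_hp1 _ hqT2; rw [hb₂0, hb₂1] at this; linarith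
  have hline2 : (-2) * x₂ + (3/5) * y₂ = 7/5 := by
    rcases eq_or_lt_of_le h8b₂ with h | h
    · exact h
    · exfalso
      have hα : 0 ≤ -10*b' - 3*a' := by linarith
      have hβ : 0 < 2*a' + 5*b' := by linarith
      linarith [mul_nonneg hα (by linarith : (0:ℝ) ≤ 7/10 - ((-1) * x₂ + (2/5) * y₂)),
        mul_pos hβ (by linarith : (0:ℝ) < 7/5 - ((-2) * x₂ + (3/5) * y₂)), hminG']
  have hy₂0 : y₂ ≤ 0 := by linarith
  have hy₂2 : -2 ≤ y₂ := by linarith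
  -- separation between tile u₁ and tile u₂
  obtain ⟨A, B, κ'', hab'', hle'', hge''⟩ := exists_sep u₁ u₂
    (fun y hy1 hy2 => hpack u₁ hu₁S u₂ hu₂S (Ne.symm hu₂ne1) y hy1 hy2)
  have hκq'' : q 0 * A + q 1 * B = κ'' :=
    le_antisymm (hle'' q hqT1) (hge'' q hqT2)
  have hmax : ∀ p : Fin 2 → ℝ, p ∈ D₈ → p 0 * A + p 1 * B ≤ x₁ * A + y₁ * B := by
    intro p hp
    have := hle'' (p + u₁) (by rw [add_sub_cancel_right]; exact hp)
    simp only [Pi.add_apply] at this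
    rw [hx₁, hy₁]
    linarith [hκq'', this]
  have hmin : ∀ p : Fin 2 → ℝ, p ∈ D₈ → x₂ * A + y₂ * B ≤ p 0 * A + p 1 * B := by
    intro p hp
    have := hge'' (p + u₂) (by rw [add_sub_cancel_right]; exact hp)
    simp only [Pi.add_apply] at this
    rw [hx₂, hy₂]
    linarith [hκq'', this]
  -- vertex instantiations
  have hmC := hmax _ D8_vC
  have hmE := hmax _ D8_vE
  have hmB := hmax _ D8_vB
  have hmF := hmax _ D8_vF
  have hmG := hmax _ D8_vG
  have hmD := hmax _ D8_vD
  have hnC := hmin _ D8_vC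
  have hnB := hmin _ D8_vB
  have hnF := hmin _ D8_vF
  have hnG := hmin _ D8_vG
  have hnD := hmin _ D8_vD
  have hnH := hmin _ D8_vH
  simp only [Matrix.cons_val_zero, Matrix.cons_val_one, Matrix.head_cons] at hmC hmE hmB hmF hmG hmD hnC hnB hnF hnG hnD hnH
  -- case analysis on the maximizing / minimizing vertex
  have hx₁eq : x₁ = (2/5)*y₁ - 7/10 := by linarith [hline1]
  have hx₂eq : x₂ = (3/10)*y₂ - 7/10 := by linarith [hline2]
  have hd1 : x₁ * A + y₁ * B ≤ (-3/10) * A + 1 * B ∨ x₁ * A + y₁ * B ≤ (-7/10) * A + 0 * B := by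
    rw [hx₁eq]
    rcases le_total 0 ((2/5) * A + B) with h | h
    · left
      linarith [mul_le_mul_of_nonneg_right hy₁1 h]
    · right
      linarith [mul_nonneg hy₁0 (by linarith : (0:ℝ) ≤ -((2/5) * A + B))]
  have hd2 : (-13/10) * A + (-2) * B ≤ x₂ * A + y₂ * B ∨ (-7/10) * A + 0 * B ≤ x₂ * A + y₂ * B := by
    rw [hx₂eq]
    rcases le_total 0 ((3/10) * A + B) with h | h
    · left
      linarith [mul_le_mul_of_nonneg_right hy₂2 h]
    · right
      linarith [mul_nonneg (by linarith : (0:ℝ) ≤ -y₂) (by linarith : (0:ℝ) ≤ -((3/10) * A + B))]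
  rcases hd1 with h1 | h1 <;> rcases hd2 with h2 | h2 <;>
    exact hab'' ⟨by linarith, by linarith⟩

/-- For `n ≥ 3` the prism `D₈ × [-1/2, 1/2]ⁿ⁻²` is not a parallelohedron:
it admits no (1-fold) lattice tiling of `ℝⁿ`. -/
theorem D8_prism_not_parallelohedron (n : ℕ) (hn : 3 ≤ n) :
    ¬ ∃ Λ : Set (Fin n → ℝ), IsFullLattice Λ ∧
      IsKFoldTiling (prism (by omega : 2 ≤ n) D₈) Λ 1 := by
  rintro ⟨Λ, ⟨bb, hΛ⟩, htile⟩
  have hn2 : 2 ≤ n := by omega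
  -- countability of the lattice
  have hcount : Λ.Countable := by
    rw [hΛ]
    have hsub : (Submodule.span ℤ (Set.range ⇑bb) : Set (Fin n → ℝ)) ⊆
        Set.range (fun c : Fin n → ℤ => ∑ i, c i • bb i) := by
      intro x hx
      obtain ⟨c, hc⟩ := (Submodule.mem_span_range_iff_exists_fun ℤ).mp hx
      exact ⟨c, hc⟩
    exact (Set.countable_range _).mono hsub
  -- choose generic shifts
  have hbad : ∀ l : Fin n, ∃ r : ℝ, ∀ v ∈ Λ, |v l - r| ≠ 1/2 := by
    intro l
    by_contra hcon
    push_neg at hcon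
    have huniv : (Set.univ : Set ℝ) ⊆
        ((fun v : Fin n → ℝ => v l - 1/2) '' Λ) ∪ ((fun v : Fin n → ℝ => v l + 1/2) '' Λ) := by
      intro r _
      obtain ⟨v, hv, habs⟩ := hcon r
      rcases (abs_eq (by norm_num : (0:ℝ) ≤ 1/2)).mp habs with h | h
      · exact Or.inl ⟨v, hv, by linarith⟩
      · exact Or.inr ⟨v, hv, by linarith⟩
    exact Cardinal.not_countable_real
      (Set.Countable.mono huniv ((hcount.image _).union (hcount.image _)))
  choose t ht using hbad
  -- the embedding of the plane
  set emb : (Fin 2 → ℝ) → (Fin n → ℝ) :=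
    fun y l => if h : (l : ℕ) < 2 then y ⟨l, h⟩ else t l with hemb
  have hproj_emb : ∀ y, proj2 hn2 (emb y) = y := by
    intro y; funext j
    have hj : ((Fin.castLE hn2 j : Fin n) : ℕ) < 2 := j.isLt
    simp only [hemb, proj2, hj, dif_pos]
    exact congrArg y (Fin.ext rfl)
  have hembhi : ∀ y (l : Fin n), 2 ≤ (l:ℕ) → emb y l = t l := by
    intro y l hl
    simp only [hemb]
    rw [dif_neg (by omega)]
  have hproj_sub : ∀ (x v : Fin n → ℝ), proj2 hn2 (x - v) = proj2 hn2 x - proj2 hn2 v :=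
    fun _ _ => rfl
  -- the planar translate set
  set S : Set (Fin 2 → ℝ) :=
    (proj2 hn2) '' {v | v ∈ Λ ∧ ∀ l : Fin n, 2 ≤ (l:ℕ) → |v l - t l| < 1/2} with hS
  -- covering
  have hcov : ∀ y : Fin 2 → ℝ, ∃ u ∈ S, y - u ∈ D₈ := by
    intro y
    have h1 := (htile (emb y)).1
    rw [Nat.cast_one] at h1
    obtain ⟨v, hvΛ, hvD, hvC⟩ := Set.one_le_encard_iff_nonempty.mp h1
    have hcube : ∀ l : Fin n, 2 ≤ (l:ℕ) → |v l - t l| < 1/2 := by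
      intro l hl
      have h := hvC l hl
      have he : (emb y - v) l = t l - v l := by
        simp only [Pi.sub_apply, hembhi y l hl]
      rw [he, abs_sub_comm] at h
      exact lt_of_le_of_ne h (ht l v hvΛ)
    refine ⟨proj2 hn2 v, ⟨v, ⟨hvΛ, hcube⟩, rfl⟩, ?_⟩
    have he : y - proj2 hn2 v = proj2 hn2 (emb y - v) := by
      rw [hproj_sub, hproj_emb]
    rw [he]; exact hvD
  -- an open subset of the prism interior
  have hO : ∀ z : Fin n → ℝ, proj2 hn2 z ∈ interior D₈ → (∀ l : Fin n, 2 ≤ (l:ℕ) → |z l| < 1/2) →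
      z ∈ interior (prism hn2 D₈) := by
    intro z hz1 hz2
    have hcont : Continuous (proj2 hn2) :=
      continuous_pi fun j => continuous_apply _
    set O : Set (Fin n → ℝ) := (proj2 hn2) ⁻¹' (interior D₈) ∩
      ⋂ l : Fin n, {x : Fin n → ℝ | 2 ≤ (l:ℕ) → |x l| < 1/2} with hOdef
    have := interior_maximal (t := O) (s := prism hn2 D₈) ?_ ?_
    · exact this ⟨hz1, Set.mem_iInter.2 fun l hl => hz2 l hl⟩
    · rintro x ⟨hx1, hx2⟩
      exact ⟨interior_subset hx1, fun l hl => ((Set.mem_iInter.mp hx2 l) hl).le⟩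
    · refine (isOpen_interior.preimage hcont).inter (isOpen_iInter_of_finite fun l => ?_)
      by_cases h : 2 ≤ (l:ℕ)
      · have he : {x : Fin n → ℝ | 2 ≤ (l:ℕ) → |x l| < 1/2} = {x | |x l| < 1/2} := by
          ext x; simp [h]
        rw [he]
        exact isOpen_lt ((continuous_apply l).abs) continuous_const
      · have he : {x : Fin n → ℝ | 2 ≤ (l:ℕ) → |x l| < 1/2} = Set.univ := by
          ext x; simp [h]
        rw [he]; exact isOpen_univ
  -- packing
  have hpack : ∀ u ∈ S, ∀ u' ∈ S, u ≠ u' → ∀ y : Fin 2 → ℝ,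
      y - u ∈ interior D₈ → y - u' ∈ interior D₈ → False := by
    intro u hu u' hu' hne y hyu hyu'
    obtain ⟨v, ⟨hvΛ, hvcube⟩, hvproj⟩ := hu
    obtain ⟨v', ⟨hv'Λ, hv'cube⟩, hv'proj⟩ := hu'
    have hvne : v ≠ v' := fun h => hne (by rw [← hvproj, ← hv'proj, h])
    have hmem : ∀ (w : Fin n → ℝ), w ∈ Λ → (∀ l : Fin n, 2 ≤ (l:ℕ) → |w l - t l| < 1/2) →
        y - proj2 hn2 w ∈ interior D₈ → emb y - w ∈ interior (prism hn2 D₈) := by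
      intro w hwΛ hwcube hyw
      apply hO
      · rw [hproj_sub, hproj_emb]; exact hyw
      · intro l hl
        have he : (emb y - w) l = t l - w l := by
          simp only [Pi.sub_apply, hembhi y l hl]
        rw [he, abs_sub_comm]
        exact hwcube l hl
    have h1 : emb y - v ∈ interior (prism hn2 D₈) :=
      hmem v hvΛ hvcube (by rw [hvproj]; exact hyu)
    have h2 : emb y - v' ∈ interior (prism hn2 D₈) :=
      hmem v' hv'Λ hv'cube (by rw [hv'proj]; exact hyu')
    have hub := (htile (emb y)).2
    rw [Nat.cast_one] at hub
    have hsub : ({v, v'} : Set (Fin n → ℝ)) ⊆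
        {w | w ∈ Λ ∧ emb y - w ∈ interior (prism (by omega : 2 ≤ n) D₈)} := by
      rintro w (rfl | rfl)
      · exact ⟨hvΛ, h1⟩
      · exact ⟨hv'Λ, h2⟩
    have h2le : (2 : ℕ∞) ≤ 1 := by
      calc (2 : ℕ∞) = ({v, v'} : Set (Fin n → ℝ)).encard := (Set.encard_pair hvne).symm
        _ ≤ _ := Set.encard_le_encard hsub
        _ ≤ 1 := hub
    norm_num at h2le
  exact no_translative_tiling S hcov hpack
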